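/- arXiv:2411.02230 — 2 statements merged into one kernel-verified Lean document; each statement's English description precedes it below -/
import Mathlib

section
/- Let E be a finite-dimensional real inner product space, W ⊆ E a measurable set, and φ : E → ℝ a nonnegative function such that φ, q ↦ φ(q) • q, and q ↦ φ(q)‖q‖² are all integrable on W. Set M = ∫_W φ(q) dq, assume M > 0, and set C = M⁻¹ • ∫_W φ(q) • q dq. Then the function F(p) = ∫_W (1/2)‖q − p‖² φ(q) dq has, at every point p ∈ E, the gradient M • (p − C); i.e., HasGradientAt F (M • (p − C)) p for every p. -/
set_option maxHeartbeats 1000000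

open MeasureTheory InnerProductSpace

/-- Gradient of the locational cost of a cell W with density φ: at every p, the
gradient is M • (p − C) (move-to-centroid law, Theorem 2 of the paper). -/
theorem locational_cost_gradient
    {E : Type*} [NormedAddCommGroup E] [InnerProductSpace ℝ E]
    [FiniteDimensional ℝ E] [MeasurableSpace E] [BorelSpace E]
    (W : Set E) (hW : MeasurableSet W)
    (φ : E → ℝ) (hφ : ∀ q, 0 ≤ φ q)
    (hφint : IntegrableOn φ W)
    (hφqint : IntegrableOn (fun q => φ q • q) W)
    (hφq2int : IntegrableOn (fun q => φ q * ‖q‖ ^ 2) W)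
    (M : ℝ) (hM : M = ∫ q in W, φ q) (hMpos : 0 < M)
    (C : E) (hC : C = M⁻¹ • ∫ q in W, φ q • q) :
    ∀ p : E,
      HasGradientAt (fun p : E => ∫ q in W, (1 / 2 : ℝ) * ‖q - p‖ ^ 2 * φ q)
        (M • (p - C)) p := by
  intro p
  set B : E := ∫ q in W, φ q • q with hB
  set A : ℝ := ∫ q in W, (1/2 : ℝ) * (φ q * ‖q‖^2) with hA
  -- rewrite the cost function
  have hFeq : (fun p : E => ∫ q in W, (1 / 2 : ℝ) * ‖q - p‖ ^ 2 * φ q)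
      = fun p : E => A + ((M/2) * ‖p‖^2 - ⟪B, p⟫_ℝ) := by
    funext p
    have hint2 : IntegrableOn (fun q => ⟪φ q • q, p⟫_ℝ) W := by
      exact ((innerSL ℝ).flip p).integrable_comp hφqint
    have hint1 : IntegrableOn (fun q => (1/2 : ℝ) * (φ q * ‖q‖^2)) W :=
      hφq2int.const_mul _
    have hint3 : IntegrableOn (fun q => (1/2 : ℝ) * ‖p‖^2 * φ q) W :=
      hφint.const_mul _
    have hint12 : IntegrableOn (fun q => (1/2 : ℝ) * (φ q * ‖q‖^2) - ⟪φ q • q, p⟫_ℝ) W :=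
      hint1.sub hint2
    have hptwise : ∀ q : E, (1 / 2 : ℝ) * ‖q - p‖ ^ 2 * φ q
        = (1/2 : ℝ) * (φ q * ‖q‖^2) - ⟪φ q • q, p⟫_ℝ + (1/2 : ℝ) * ‖p‖^2 * φ q := by
      intro q
      rw [@norm_sub_sq_real E]
      simp [real_inner_smul_left]
      ring
    calc ∫ q in W, (1 / 2 : ℝ) * ‖q - p‖ ^ 2 * φ q
        = ∫ q in W, ((1/2 : ℝ) * (φ q * ‖q‖^2) - ⟪φ q • q, p⟫_ℝ
            + (1/2 : ℝ) * ‖p‖^2 * φ q) := by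
          exact integral_congr_ae (Filter.Eventually.of_forall fun q => hptwise q)
      _ = A - (∫ q in W, ⟪φ q • q, p⟫_ℝ) + (1/2 : ℝ) * ‖p‖^2 * (∫ q in W, φ q) := by
          rw [integral_add hint12 hint3]
          rw [integral_sub hint1 hint2, hA]
          simp only [integral_const_mul]
      _ = A + ((M/2) * ‖p‖^2 - ⟪B, p⟫_ℝ) := by
          have : (∫ q in W, ⟪φ q • q, p⟫_ℝ) = ⟪B, p⟫_ℝ := by
            rw [real_inner_comm, hB, ← integral_inner hφqint p]
            exact integral_congr_ae (Filter.Eventually.of_forall fun q => real_inner_comm _ _)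
          rw [this, ← hM]; ring
  rw [hFeq]
  -- gradient of the quadratic form
  have hMC : M • C = B := by
    rw [hC, smul_smul, mul_inv_cancel₀ hMpos.ne', one_smul]
  rw [hasGradientAt_iff_hasFDerivAt]
  have h1 : HasFDerivAt (fun p : E => ⟪p, p⟫_ℝ) (innerSL ℝ p + innerSL ℝ p) p := by
    have := (hasFDerivAt_id p).inner ℝ (hasFDerivAt_id p)
    refine this.congr_fderiv ?_
    ext v
    simp [real_inner_comm]
  have h2 : HasFDerivAt (fun p : E => ⟪B, p⟫_ℝ) (innerSL ℝ B) p := (innerSL ℝ B).hasFDerivAt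
  have h3 := ((h1.const_mul (M/2)).sub h2).const_add A
  convert h3 using 1
  · rfl
  · rfl
  · funext q
    simp only [Pi.sub_apply]
    rw [real_inner_self_eq_norm_sq]
  · ext v
    rw [← hMC]
    simp [toDual_apply_apply, inner_sub_left, inner_smul_left]
    ring
end

section
/- Let E be a finite-dimensional real inner product space, W ⊆ E a measurable set, and φ : E → ℝ a nonnegative function such that φ, q ↦ φ(q) • q, and q ↦ φ(q)‖q‖² are all integrable on W. Set M = ∫_W φ(q) dq, assume M > 0, and set C = M⁻¹ • ∫_W φ(q) • q dq. Let k_p ≥ 0 and let p : ℝ → E be a differentiable function satisfying p'(t) = k_p • (C − p(t)) for all t. Then the function h(t) = ∫_W (1/2)‖q − p(t)‖² φ(q) dq is differentiable with h'(t) = −k_p · M · ‖C − p(t)‖² for all t; in particular h is monotonically nonincreasing. -/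
open MeasureTheory

open scoped RealInnerProductSpace

/-- Lyapunov decrease of the single-cell locational cost along the
centroid-seeking controller ṗ = k_p (C − p) (Theorem 2 of the paper):
h'(t) = −k_p M ‖C − p(t)‖², so h is nonincreasing. -/
theorem locational_cost_decreases_along_controller
    {E : Type*} [NormedAddCommGroup E] [InnerProductSpace ℝ E]
    [FiniteDimensional ℝ E] [MeasurableSpace E] [BorelSpace E]
    (W : Set E) (hW : MeasurableSet W)
    (φ : E → ℝ) (hφ : ∀ q, 0 ≤ φ q)
    (hφint : IntegrableOn φ W)
    (hφqint : IntegrableOn (fun q => φ q • q) W)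
    (hφq2int : IntegrableOn (fun q => φ q * ‖q‖ ^ 2) W)
    (M : ℝ) (hM : M = ∫ q in W, φ q) (hMpos : 0 < M)
    (C : E) (hC : C = M⁻¹ • ∫ q in W, φ q • q)
    (kp : ℝ) (hkp : 0 ≤ kp)
    (p : ℝ → E) (hp : ∀ t : ℝ, HasDerivAt p (kp • (C - p t)) t)
    (h : ℝ → ℝ)
    (hh : ∀ t : ℝ, h t = ∫ q in W, (1 / 2 : ℝ) * ‖q - p t‖ ^ 2 * φ q) :
    (∀ t : ℝ, HasDerivAt h (-kp * M * ‖C - p t‖ ^ 2) t) ∧ Antitone h := by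
  set S : E := ∫ q in W, φ q • q with hS
  set A : ℝ := ∫ q in W, (1 / 2 : ℝ) * ‖q‖ ^ 2 * φ q with hA
  have hSC : S = M • C := by
    rw [hC, smul_smul, mul_inv_cancel₀ hMpos.ne', one_smul]
  -- closed form for h
  have hclosed : ∀ t, h t = A - ⟪S, p t⟫ + (M / 2) * ⟪p t, p t⟫ := by
    intro t
    rw [hh t]
    have hpt : ∀ q : E, (1 / 2 : ℝ) * ‖q - p t‖ ^ 2 * φ q
        = (1 / 2 : ℝ) * ‖q‖ ^ 2 * φ q - ⟪φ q • q, p t⟫ + (1 / 2) * ‖p t‖ ^ 2 * φ q := by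
      intro q
      rw [@norm_sub_sq_real E, real_inner_smul_left]
      ring
    simp only [hpt]
    have h1 : IntegrableOn (fun q => (1 / 2 : ℝ) * ‖q‖ ^ 2 * φ q) W := by
      have := hφq2int.const_mul (1 / 2 : ℝ)
      exact this.congr (ae_of_all _ fun q => by ring)
    have h2 : IntegrableOn (fun q => ⟪φ q • q, (p t : E)⟫) W :=
      ((innerSL ℝ (p t)).integrable_comp hφqint).congr
        (ae_of_all _ fun q => real_inner_comm _ _)
    have h3 : IntegrableOn (fun q => (1 / 2 : ℝ) * ‖p t‖ ^ 2 * φ q) W :=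
      hφint.const_mul _
    have h12 : IntegrableOn
        (fun q => (1 / 2 : ℝ) * ‖q‖ ^ 2 * φ q - ⟪φ q • q, (p t : E)⟫) W := h1.sub h2
    rw [integral_add h12 h3, integral_sub h1 h2]
    have hinner : (∫ q in W, ⟪φ q • q, (p t : E)⟫) = ⟪S, p t⟫ := by
      calc (∫ q in W, ⟪φ q • q, (p t : E)⟫)
          = ∫ q in W, ⟪(p t : E), φ q • q⟫ := by
            simp_rw [real_inner_comm]
        _ = ⟪(p t : E), S⟫ := integral_inner hφqint _
        _ = ⟪S, p t⟫ := real_inner_comm _ _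
    have hlast : (∫ q in W, (1 / 2 : ℝ) * ‖p t‖ ^ 2 * φ q)
        = (M / 2) * ⟪p t, p t⟫ := by
      rw [integral_const_mul, hM, real_inner_self_eq_norm_sq]; ring
    rw [hinner, hlast]
  have key : ∀ t, HasDerivAt h (-kp * M * ‖C - p t‖ ^ 2) t := by
    intro t
    have hd1 : HasDerivAt (fun s => ⟪S, p s⟫)
        (⟪S, kp • (C - p t)⟫ + ⟪(0 : E), p t⟫) t :=
      (hasDerivAt_const t S).inner ℝ (hp t)
    have hd2 : HasDerivAt (fun s => ⟪p s, p s⟫)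
        (⟪p t, kp • (C - p t)⟫ + ⟪kp • (C - p t), p t⟫) t :=
      (hp t).inner ℝ (hp t)
    have hd : HasDerivAt (fun s => A - ⟪S, p s⟫ + (M / 2) * ⟪p s, p s⟫)
        (0 - (⟪S, kp • (C - p t)⟫ + ⟪(0 : E), p t⟫)
          + (M / 2) * (⟪p t, kp • (C - p t)⟫ + ⟪kp • (C - p t), p t⟫)) t :=
      ((hasDerivAt_const t A).sub hd1).add (hd2.const_mul (M / 2))
    have hfun : h = fun s => A - ⟪S, p s⟫ + (M / 2) * ⟪p s, p s⟫ :=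
      funext hclosed
    rw [hfun]
    convert hd using 1
    have e : ⟪C, C - p t⟫ - ⟪p t, C - p t⟫ = ‖C - p t‖ ^ 2 := by
      rw [← inner_sub_left, real_inner_self_eq_norm_sq]
    rw [hSC]
    simp only [inner_zero_left, real_inner_smul_left, real_inner_smul_right,
      real_inner_comm (kp • (C - p t)) (p t)]
    have e2 : ⟪C - p t, p t⟫ = ⟪p t, C - p t⟫ := real_inner_comm _ _
    linear_combination (kp * M) * e - (kp * M) * e2
  refine ⟨key, ?_⟩
  apply antitone_of_deriv_nonpos
  · exact fun t => (key t).differentiableAt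
  · intro t
    rw [(key t).deriv]
    have : 0 ≤ kp * M * ‖C - p t‖ ^ 2 := by positivity
    linarith
end
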